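/- Let G be a finite directed graph in which every cycle of G intersects a fixed directed cycle C₁. Then every arc of G whose endpoints all lie on some directed cycle and which is not an arc of C₁ lies on a path that starts at a vertex of C₁, ends at a vertex of C₁, and whose internal vertices and arcs are disjoint from C₁. -/

import Mathlib

/-- The cyclically-consecutive pairs of a list: `(c i, c (i+1 mod n))` for all `i`. -/
def cyclicPairs {V : Type} (c : List V) : List (V × V) := c.zip (c.rotate 1)

/-- `d` is (the vertex list of) a directed cycle of the graph `A`: it is nonempty,
has no repeated vertices, and every cyclically-consecutive pair is an arc. -/
def IsCycleList {V : Type} (A : V → V → Prop) (d : List V) : Prop :=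
  d ≠ [] ∧ d.Nodup ∧ ∀ pr ∈ cyclicPairs d, A pr.1 pr.2

/-- Each consecutive (cyclic) pair of a cycle list is an arc. -/
lemma cycle_arc {V : Type} {A : V → V → Prop} {d : List V} (hd : IsCycleList A d)
    {t : ℕ} (ht : t < d.length) (ht' : (t + 1) % d.length < d.length) :
    A d[t] d[(t + 1) % d.length] := by
  have hlen : (d.zip (d.rotate 1)).length = d.length := by
    simp [List.length_zip, List.length_rotate]
  have hmem : (d.zip (d.rotate 1))[t]'(by omega) ∈ cyclicPairs d := List.getElem_mem _
  have h := hd.2.2 _ hmem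
  rw [List.getElem_zip] at h
  have hr : (d.rotate 1)[t]'(by rw [List.length_rotate]; omega) = d[(t + 1) % d.length] := by
    have := List.get_rotate d 1 ⟨t, by rw [List.length_rotate]; omega⟩
    simpa [List.get_eq_getElem] using this
  rw [hr] at h
  exact h

/-- Flexible-index version of `cycle_arc`. -/
lemma cycle_arc' {V : Type} {A : V → V → Prop} {d : List V} (hd : IsCycleList A d)
    {s t : ℕ} (hs : s < d.length) (ht : t < d.length) (hst : t = (s + 1) % d.length) :
    A d[s] d[t] := by
  subst hst
  exact cycle_arc hd hs ht

/-- Build a path list from a function on an interval of naturals. -/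
lemma walk_props {V : Type} {A : V → V → Prop} (f : ℕ → V) (m : ℕ)
    (hch : ∀ k < m, A (f k) (f (k + 1))) :
    ∃ p : List V, p.length = m + 1 ∧ List.Chain' A p ∧
      p.head? = some (f 0) ∧ p.getLast? = some (f m) ∧
      (∀ v ∈ p, ∃ k ≤ m, v = f k) ∧
      (∀ pr ∈ p.zip p.tail, ∃ k < m, pr = (f k, f (k + 1))) ∧
      (∀ k < m, (f k, f (k + 1)) ∈ p.zip p.tail) := by
  refine ⟨(List.range (m + 1)).map f, by simp, ?_, ?_, ?_, ?_, ?_, ?_⟩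
  · rw [show List.Chain' A _ = List.IsChain A _ from rfl, List.isChain_map]
    rw [show m + 1 = m.succ from rfl, List.isChain_range_succ]
    exact hch
  · rw [List.range_succ_eq_map]
    simp
  · rw [List.getLast?_eq_getElem?]
    have hlen : ((List.range (m + 1)).map f).length = m + 1 := by simp
    rw [hlen]
    simp
  · intro v hv
    simp only [List.mem_map, List.mem_range] at hv
    obtain ⟨k, hk, hkv⟩ := hv
    exact ⟨k, by omega, hkv.symm⟩
  · intro pr hpr
    set p := (List.range (m + 1)).map f with hp
    have hlen : p.length = m + 1 := by simp [hp]
    have hlent : p.tail.length = m := by simp [hp]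
    rw [List.mem_iff_getElem] at hpr
    obtain ⟨k, hk, hkeq⟩ := hpr
    have hk' : k < m := by
      have := List.length_zip (l₁ := p) (l₂ := p.tail)
      omega
    refine ⟨k, hk', ?_⟩
    rw [List.getElem_zip] at hkeq
    have h1 : p[k]'(by omega) = f k := by simp [hp]
    have h2 : p.tail[k]'(by omega) = f (k + 1) := by
      rw [List.getElem_tail]
      simp [hp]
    rw [h1, h2] at hkeq
    exact hkeq.symm
  · intro k hk
    set p := (List.range (m + 1)).map f with hp
    have hlen : p.length = m + 1 := by simp [hp]
    have hlent : p.tail.length = m := by simp [hp]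
    have hkz : k < (p.zip p.tail).length := by
      rw [List.length_zip]; omega
    have : (p.zip p.tail)[k]'hkz = (f k, f (k + 1)) := by
      rw [List.getElem_zip]
      have h1 : p[k]'(by omega) = f k := by simp [hp]
      have h2 : p.tail[k]'(by omega) = f (k + 1) := by
        rw [List.getElem_tail]
        simp [hp]
      rw [h1, h2]
    rw [← this]
    exact List.getElem_mem _

/-- Both components of a cyclic pair of `c` lie in `c`. -/
lemma cyclicPairs_mem {V : Type} {c : List V} {pr : V × V} (h : pr ∈ cyclicPairs c) :
    pr.1 ∈ c ∧ pr.2 ∈ c := by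
  obtain ⟨a, b⟩ := pr
  have := List.of_mem_zip h
  exact ⟨this.1, (List.mem_rotate).1 this.2⟩

/-- Proposition 5: if every directed cycle of `G` intersects a fixed directed cycle `c`,
then every arc `(x → y)` with both endpoints lying on some directed cycle, and which is
not an arc of `c`, lies on a path that starts and ends at vertices of `c` and whose
internal vertices and arcs are disjoint from `c`. -/
theorem arc_on_outer_path {V : Type} [Fintype V] (A : V → V → Prop)
    (c : List V) (hc : IsCycleList A c)
    (hmeet : ∀ d : List V, IsCycleList A d → ∃ v ∈ d, v ∈ c)
    (x y : V) (hxy : A x y)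
    (hx : ∃ d, IsCycleList A d ∧ x ∈ d)
    (hy : ∃ d, IsCycleList A d ∧ y ∈ d)
    (hnot : (x, y) ∉ cyclicPairs c) :
    ∃ p : List V, 2 ≤ p.length ∧ List.Chain' A p ∧
      (∀ a, p.head? = some a → a ∈ c) ∧
      (∀ b, p.getLast? = some b → b ∈ c) ∧
      (∀ v ∈ p, p.head? ≠ some v → p.getLast? ≠ some v → v ∉ c) ∧
      (∀ pr ∈ p.zip p.tail, pr ∉ cyclicPairs c) ∧
      (x, y) ∈ p.zip p.tail := by
  classical
  obtain ⟨dx, hdx, hxdx⟩ := hx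
  obtain ⟨dy, hdy, hydy⟩ := hy
  obtain ⟨u, hudx, huc⟩ := hmeet dx hdx
  obtain ⟨u', hu'dy, hu'c⟩ := hmeet dy hdy
  set n1 := dx.length with hn1def
  set n2 := dy.length with hn2def
  have hn1 : 0 < n1 := List.length_pos_iff.mpr hdx.1
  have hn2 : 0 < n2 := List.length_pos_iff.mpr hdy.1
  set i0 := List.idxOf u dx with hi0def
  set jx := List.idxOf x dx with hjxdef
  set j0 := List.idxOf y dy with hj0def
  set ju := List.idxOf u' dy with hjudef
  have hi0 : i0 < n1 := List.idxOf_lt_length_iff.mpr hudx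
  have hjx : jx < n1 := List.idxOf_lt_length_iff.mpr hxdx
  have hj0 : j0 < n2 := List.idxOf_lt_length_iff.mpr hydy
  have hju : ju < n2 := List.idxOf_lt_length_iff.mpr hu'dy
  set m1 := (jx + n1 - i0) % n1 with hm1def
  set m2 := (ju + n2 - j0) % n2 with hm2def
  set f : ℕ → V := fun k =>
    if k ≤ m1 then dx[(i0 + k) % n1]'(Nat.mod_lt _ hn1)
    else dy[(j0 + (k - (m1 + 1))) % n2]'(Nat.mod_lt _ hn2) with hfdef
  -- key values of f
  have hf0 : f 0 = u := by
    simp only [hfdef, if_pos (Nat.zero_le m1)]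
    have : (i0 + 0) % n1 = i0 := by
      rw [Nat.add_zero, Nat.mod_eq_of_lt hi0]
    simp_rw [this]
    exact List.idxOf_get hi0
  have hfm1 : f m1 = x := by
    simp only [hfdef, if_pos (le_refl m1)]
    have h1 : (i0 + m1) % n1 = jx := by
      rw [hm1def, Nat.add_mod_mod]
      have : i0 + (jx + n1 - i0) = jx + n1 := by omega
      rw [this, Nat.add_mod_right, Nat.mod_eq_of_lt hjx]
    simp_rw [h1]
    exact List.idxOf_get hjx
  have hfm1' : f (m1 + 1) = y := by
    simp only [hfdef, if_neg (by omega : ¬ m1 + 1 ≤ m1)]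
    have h1 : (j0 + (m1 + 1 - (m1 + 1))) % n2 = j0 := by
      simp [Nat.mod_eq_of_lt hj0]
    simp_rw [h1]
    exact List.idxOf_get hj0
  have hfM : f (m1 + 1 + m2) = u' := by
    simp only [hfdef, if_neg (by omega : ¬ m1 + 1 + m2 ≤ m1)]
    have h1 : (j0 + (m1 + 1 + m2 - (m1 + 1))) % n2 = ju := by
      have : m1 + 1 + m2 - (m1 + 1) = m2 := by omega
      rw [this, hm2def, Nat.add_mod_mod]
      have : j0 + (ju + n2 - j0) = ju + n2 := by omega
      rw [this, Nat.add_mod_right, Nat.mod_eq_of_lt hju]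
    simp_rw [h1]
    exact List.idxOf_get hju
  -- the chain property for f
  have hchain : ∀ k < m1 + 1 + m2, A (f k) (f (k + 1)) := by
    intro k hk
    rcases lt_trichotomy k m1 with hlt | heq | hgt
    · have h1 : f k = dx[(i0 + k) % n1]'(Nat.mod_lt _ hn1) := by
        simp only [hfdef, if_pos (by omega : k ≤ m1)]
      have h2 : f (k + 1) = dx[(i0 + (k + 1)) % n1]'(Nat.mod_lt _ hn1) := by
        simp only [hfdef, if_pos (by omega : k + 1 ≤ m1)]
      rw [h1, h2]
      exact cycle_arc' hdx (Nat.mod_lt (i0 + k) hn1) (Nat.mod_lt (i0 + (k + 1)) hn1)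
        (by rw [Nat.mod_add_mod, ← Nat.add_assoc])
    · subst heq
      rw [hfm1, hfm1']
      exact hxy
    · have h1 : f k = dy[(j0 + (k - (m1 + 1))) % n2]'(Nat.mod_lt _ hn2) := by
        simp only [hfdef, if_neg (by omega : ¬ k ≤ m1)]
      have h2 : f (k + 1) = dy[(j0 + (k + 1 - (m1 + 1))) % n2]'(Nat.mod_lt _ hn2) := by
        simp only [hfdef, if_neg (by omega : ¬ k + 1 ≤ m1)]
      rw [h1, h2]
      exact cycle_arc' hdy (Nat.mod_lt (j0 + (k - (m1 + 1))) hn2)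
        (Nat.mod_lt (j0 + (k + 1 - (m1 + 1))) hn2)
        (by rw [Nat.mod_add_mod]; congr 1; omega)
  -- trimming: find the last c-vertex before x and the first c-vertex after y
  set P : ℕ → Prop := fun t => f t ∈ c with hPdef
  set i := Nat.findGreatest P m1 with hidef
  have hile : i ≤ m1 := Nat.findGreatest_le m1
  have hPi : P i := Nat.findGreatest_spec (Nat.zero_le m1) (by rw [hPdef]; simpa [hf0] using huc)
  have himax : ∀ t, i < t → t ≤ m1 → ¬ P t := fun t h1 h2 => Nat.findGreatest_is_greatest h1 h2
  have hex : ∃ t, P (m1 + 1 + t) := ⟨m2, by rw [hPdef]; simpa [hfM] using hu'c⟩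
  set j := m1 + 1 + Nat.find hex with hjdef
  have hPj : P j := Nat.find_spec hex
  have hjle : j ≤ m1 + 1 + m2 := by
    have h : Nat.find hex ≤ m2 :=
      Nat.find_le (show P (m1 + 1 + m2) by simp only [hPdef]; rw [hfM]; exact hu'c)
    omega
  have hjmin : ∀ t, m1 + 1 ≤ t → t < j → ¬ P t := by
    intro t h1 h2 hP
    have h3 : t - (m1 + 1) < Nat.find hex := by omega
    exact Nat.find_min hex h3 (by rwa [show m1 + 1 + (t - (m1 + 1)) = t by omega])
  -- key: any position in [i, j] whose vertex lies in c is i or j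
  have hkey : ∀ t, i ≤ t → t ≤ j → f t ∈ c → t = i ∨ t = j := by
    intro t h1 h2 hfc
    by_contra hcon
    push_neg at hcon
    rcases le_or_gt t m1 with h3 | h3
    · exact himax t (by omega) h3 hfc
    · exact hjmin t (by omega) (by omega) hfc
  have hij : i < j := by omega
  -- build the trimmed path
  obtain ⟨p, hplen, hpchain, hphead, hplast, hpmem, hpzip, hpzip'⟩ :=
    walk_props (A := A) (fun k => f (i + k)) (j - i)
      (fun k hk => by
        have : A (f (i + k)) (f (i + k + 1)) := hchain (i + k) (by omega)
        simpa [Nat.add_assoc] using this)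
  have hfij : f (i + (j - i)) = f j := by congr 1; omega
  refine ⟨p, by omega, hpchain, ?_, ?_, ?_, ?_, ?_⟩
  · intro a ha
    rw [hphead] at ha
    injection ha with ha
    rw [← ha]
    exact hPi
  · intro b hb
    rw [hplast, hfij] at hb
    injection hb with hb
    rw [← hb]
    exact hPj
  · intro v hv hh hl hvc
    obtain ⟨k, hk, hkv⟩ := hpmem v hv
    have := hkey (i + k) (by omega) (by omega) (hkv ▸ hvc)
    rcases this with h | h
    · have : k = 0 := by omega
      subst this
      exact hh (by rw [hphead, ← hkv])
    · have hik : i + k = j := h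
      exact hl (by rw [hplast, hfij, ← hik, ← hkv])
  · intro pr hpr hprc
    obtain ⟨k, hk, hkeq⟩ := hpzip pr hpr
    obtain ⟨h1c, h2c⟩ := cyclicPairs_mem (hkeq ▸ hprc)
    simp only at h1c h2c
    have hA := hkey (i + k) (by omega) (by omega) h1c
    have hB := hkey (i + k + 1) (by omega) (by omega) (by
      have : f (i + (k + 1)) = f (i + k + 1) := rfl
      rwa [this] at h2c)
    have hk0 : k = 0 := by omega
    have hji : j = i + 1 := by omega
    have him1 : i = m1 := by omega
    apply hnot
    have : pr = (x, y) := by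
      rw [hkeq, hk0]
      have e1 : f (i + 0) = x := by rw [Nat.add_zero, him1, hfm1]
      have e2 : f (i + (0 + 1)) = y := by
        rw [show i + (0 + 1) = m1 + 1 by omega, hfm1']
      rw [e1, e2]
    rwa [this] at hprc
  · have hm1i : m1 - i < j - i := by omega
    have := hpzip' (m1 - i) hm1i
    have e1 : f (i + (m1 - i)) = x := by rw [show i + (m1 - i) = m1 by omega, hfm1]
    have e2 : f (i + (m1 - i + 1)) = y := by
      rw [show i + (m1 - i + 1) = m1 + 1 by omega, hfm1']
    rwa [e1, e2] at this
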